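/- Let A be a non-unital associative algebra over a field F which is simple, i.e., A·A ≠ {0}, the only two-sided ideals of A are {0} and A, and A has no multiplicative identity element. Then the unitization A^♯ = F × A (with multiplication (λ, a)(μ, b) = (λμ, λb + μa + ab)) is a nearly simple algebra whose unique non-trivial two-sided ideal is the canonical copy {(0, a) : a ∈ A} of A. -/

import Mathlib

section aux

variable {F A : Type*} [Field F] [NonUnitalRing A] [Module F A]
    [SMulCommClass F A A] [IsScalarTower F A A]

set_option linter.unusedSectionVars false in
private lemma mul_inr_mem (x : Unitization F A) (a : A) :
    x * Unitization.inr a = Unitization.inr (x.fst • a + x.snd * a) := by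
  conv_lhs => rw [← Unitization.inl_fst_add_inr_snd_eq x]
  rw [add_mul, Unitization.inl_mul_inr, ← Unitization.inr_mul, ← Unitization.inr_add]

set_option linter.unusedSectionVars false in
private lemma inr_mul_mem (x : Unitization F A) (a : A) :
    Unitization.inr a * x = Unitization.inr (x.fst • a + a * x.snd) := by
  conv_lhs => rw [← Unitization.inl_fst_add_inr_snd_eq x]
  rw [mul_add, Unitization.inr_mul_inl, ← Unitization.inr_mul, ← Unitization.inr_add]

end aux

/-- If `A` is a simple non-unital algebra over a field `F` (i.e. `A·A ≠ {0}`, the only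
two-sided ideals of `A` are `{0}` and `A`, and `A` has no multiplicative identity), then
the unitization `A^♯ = F × A` is a nearly simple algebra whose unique non-trivial
two-sided ideal is the canonical copy `{(0, a) : a ∈ A}` of `A`. -/
theorem unitization_of_nonunital_simple_is_nearly_simple
    (F A : Type*) [Field F] [NonUnitalRing A] [Module F A]
    [SMulCommClass F A A] [IsScalarTower F A A]
    (hmul : ∃ x y : A, x * y ≠ 0)
    (hsimple : ∀ J : TwoSidedIdeal A, J = ⊥ ∨ J = ⊤)
    (hnounit : ¬ ∃ e : A, ∀ a : A, e * a = a ∧ a * e = a) :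
    ∃ I : TwoSidedIdeal (Unitization F A),
      (I : Set (Unitization F A)) = Set.range (Unitization.inr : A → Unitization F A) ∧
      I ≠ ⊥ ∧ I ≠ ⊤ ∧
      (∀ J : TwoSidedIdeal (Unitization F A), J ≠ ⊥ → J ≠ ⊤ → J = I) ∧
      (∃ x ∈ I, ∃ y ∈ I, x * y ≠ 0) := by
  classical
  refine ⟨TwoSidedIdeal.mk' (Set.range (Unitization.inr : A → Unitization F A))
      (Set.mem_range.mpr ⟨0, Unitization.inr_zero F⟩)
      (fun ⟨a, ha⟩ ⟨b, hb⟩ => ⟨a + b, by rw [← ha, ← hb]; exact Unitization.inr_add F a b⟩)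
      (fun ⟨a, ha⟩ => ⟨-a, by rw [← ha]; exact Unitization.inr_neg F a⟩)
      (fun {x y} ⟨a, ha⟩ => ⟨x.fst • a + x.snd * a, by rw [← ha, mul_inr_mem]⟩)
      (fun {x y} ⟨a, ha⟩ => ⟨y.fst • a + a * y.snd, by rw [← ha, inr_mul_mem]⟩),
    TwoSidedIdeal.coe_mk' _ _ _ _ _ _, ?_, ?_, ?_, ?_⟩
  · -- I ≠ ⊥
    obtain ⟨x, y, hxy⟩ := hmul
    intro h
    have hx : Unitization.inr x ∈ (⊥ : TwoSidedIdeal (Unitization F A)) := by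
      rw [← h, TwoSidedIdeal.mem_mk']; exact ⟨x, rfl⟩
    rw [TwoSidedIdeal.mem_bot] at hx
    have : x = 0 := Unitization.inr_injective (by simpa using hx)
    exact hxy (by rw [this, zero_mul])
  · -- I ≠ ⊤
    intro h
    have h1 := TwoSidedIdeal.one_mem _ h
    rw [TwoSidedIdeal.mem_mk'] at h1
    obtain ⟨a, ha⟩ := h1
    have := congrArg (fun z : Unitization F A => z.fst) ha
    simp at this
  · -- uniqueness
    intro J hJbot hJtop
    set K : TwoSidedIdeal A := TwoSidedIdeal.mk'
      {a : A | (Unitization.inr a : Unitization F A) ∈ J}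
      (by show (Unitization.inr (0 : A) : Unitization F A) ∈ J
          rw [Unitization.inr_zero]; exact J.zero_mem)
      (fun {a b} ha hb => by
        show (Unitization.inr (a + b) : Unitization F A) ∈ J
        rw [Unitization.inr_add]; exact J.add_mem ha hb)
      (fun {a} ha => by
        show (Unitization.inr (-a) : Unitization F A) ∈ J
        rw [Unitization.inr_neg]; exact J.neg_mem ha)
      (fun {a b} hb => by
        show (Unitization.inr (a * b) : Unitization F A) ∈ J
        rw [Unitization.inr_mul]; exact J.mul_mem_left _ _ hb)
      (fun {a b} ha => by
        show (Unitization.inr (a * b) : Unitization F A) ∈ J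
        rw [Unitization.inr_mul]; exact J.mul_mem_right _ _ ha) with hK
    have memK : ∀ a : A, a ∈ K ↔ (Unitization.inr a : Unitization F A) ∈ J :=
      fun a => TwoSidedIdeal.mem_mk' _ _ _ _ _ _ a
    by_cases hfst : ∃ x ∈ J, x.fst ≠ 0
    · -- J contains an element with nonzero scalar part : contradiction
      exfalso
      obtain ⟨x, hxJ, hx0⟩ := hfst
      have hy : (algebraMap F (Unitization F A) x.fst⁻¹) * x ∈ J :=
        J.mul_mem_left _ _ hxJ
      set y := (algebraMap F (Unitization F A) x.fst⁻¹) * x with hy_def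
      have hyfst : y.fst = 1 := by
        simp [hy_def, Unitization.algebraMap_eq_inl, inv_mul_cancel₀ hx0]
      set e : A := y.snd with he
      rcases hsimple K with hKbot | hKtop
      · apply hnounit
        refine ⟨-e, fun a => ?_⟩
        have h1 : y * Unitization.inr a ∈ J := J.mul_mem_right _ _ hy
        have h2 : Unitization.inr a * y ∈ J := J.mul_mem_left _ _ hy
        rw [mul_inr_mem, hyfst, one_smul] at h1
        rw [inr_mul_mem, hyfst, one_smul] at h2
        have h1' : a + e * a ∈ K := (memK _).2 h1
        have h2' : a + a * e ∈ K := (memK _).2 h2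
        rw [hKbot, TwoSidedIdeal.mem_bot] at h1' h2'
        constructor
        · rw [neg_mul]; linear_combination (norm := abel) -h1'
        · rw [mul_neg]; linear_combination (norm := abel) -h2'
      · apply hJtop
        have heJ : (Unitization.inr e : Unitization F A) ∈ J := by
          rw [← memK, hKtop]; exact TwoSidedIdeal.mem_top _
        refine J.eq_top ?_
        have hsub := J.sub_mem hy heJ
        have hy1 : y - Unitization.inr e = 1 := by
          conv_lhs => rw [← Unitization.inl_fst_add_inr_snd_eq y]
          rw [hyfst, ← he]
          simp [Unitization.inl_one]
        rwa [hy1] at hsub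
    · -- all elements of J have zero scalar part : J = I
      push_neg at hfst
      have hJsub : ∀ x ∈ J, ∃ a : A, (Unitization.inr a : Unitization F A) = x := by
        intro x hx
        refine ⟨x.snd, ?_⟩
        conv_rhs => rw [← Unitization.inl_fst_add_inr_snd_eq x]
        rw [hfst x hx]
        simp
      have hKne : K ≠ ⊥ := by
        intro hKbot
        apply hJbot
        refine SetLike.ext fun x => ?_
        rw [TwoSidedIdeal.mem_bot]
        constructor
        · intro hx
          obtain ⟨a, ha⟩ := hJsub x hx
          have h0 : a ∈ K := (memK a).2 (ha ▸ hx)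
          rw [hKbot, TwoSidedIdeal.mem_bot] at h0
          rw [← ha, h0, Unitization.inr_zero]
        · rintro rfl; exact J.zero_mem
      have hKtop : K = ⊤ := (hsimple K).resolve_left hKne
      refine SetLike.ext fun x => ?_
      rw [TwoSidedIdeal.mem_mk']
      constructor
      · intro hx
        exact hJsub x hx
      · rintro ⟨a, rfl⟩
        rw [← memK, hKtop]; exact TwoSidedIdeal.mem_top _
  · -- I·I ≠ 0
    obtain ⟨x, y, hxy⟩ := hmul
    refine ⟨Unitization.inr x, ?_, Unitization.inr y, ?_, ?_⟩
    · rw [TwoSidedIdeal.mem_mk']; exact ⟨x, rfl⟩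
    · rw [TwoSidedIdeal.mem_mk']; exact ⟨y, rfl⟩
    · intro h
      rw [← Unitization.inr_mul] at h
      exact hxy (Unitization.inr_injective (h.trans (Unitization.inr_zero F).symm))
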